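/- Let Λ : ℝ² → ℝ, let h, g : ℝ → ℝ be continuous and nowhere zero, and let U, V : ℝ → ℝ be differentiable bijections with U′ = 1/h and V′ = 1/g. Define Φ : ℝ² → ℝ² by Φ(x,t) = (U⁻¹(x−t), V⁻¹(x+t)). Then for every (x,t) ∈ ℝ² and every tangent vector (a,b) ∈ ℝ², writing (p,q) for the image of (a,b) under the derivative of Φ at (x,t), one has Λ(Φ(x,t))·p·q = Λ(Φ(x,t))·h(U⁻¹(x−t))·g(V⁻¹(x+t))·(a² − b²). In other words, the pullback under Φ of the quadratic form Λ du dv is (Λ∘Φ)·(h∘U⁻¹(x−t))·(g∘V⁻¹(x+t))·(dx² − dt²). -/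

import Mathlib

open Function

private lemma invFun_hasDerivAt (h : ℝ → ℝ) (hh0 : ∀ u, h u ≠ 0)
    (U : ℝ → ℝ) (hU : Differentiable ℝ U) (hUbij : Function.Bijective U)
    (hU' : ∀ u, deriv U u = 1 / h u) :
    ∀ y, HasDerivAt (Function.invFun U) (h (Function.invFun U y)) y := by
  have rightInv : ∀ y, U (Function.invFun U y) = y := fun y =>
    Function.invFun_eq (hUbij.2 y)
  have hcont : Continuous (Function.invFun U) := by
    rcases hU.continuous.strictMono_of_inj hUbij.1 with hm | ha
    · let E := StrictMono.orderIsoOfSurjective U hm hUbij.2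
      have : Function.invFun U = ⇑E.symm := funext fun y =>
        hUbij.1 (by rw [rightInv]; exact (E.apply_symm_apply y).symm)
      rw [this]
      exact E.symm.toHomeomorph.continuous
    · have hm : StrictMono (fun x => U (-x)) := fun a b hab => ha (neg_lt_neg hab)
      have hsurj : Function.Surjective (fun x => U (-x)) := fun y => by
        obtain ⟨x, hx⟩ := hUbij.2 y; exact ⟨-x, by simpa using hx⟩
      let E := StrictMono.orderIsoOfSurjective _ hm hsurj
      have : Function.invFun U = fun y => -(E.symm y : ℝ) := by
        funext y
        apply hUbij.1
        rw [rightInv]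
        exact (E.apply_symm_apply y).symm
      rw [this]
      exact (E.symm.toHomeomorph.continuous).neg
  intro y
  have hd : HasDerivAt U (1 / h (Function.invFun U y)) (Function.invFun U y) := by
    have := (hU (Function.invFun U y)).hasDerivAt
    rwa [hU'] at this
  have := hd.of_local_left_inverse hcont.continuousAt
    (by simp [hh0 (Function.invFun U y)])
    (Filter.Eventually.of_forall rightInv)
  simpa [hh0 (Function.invFun U y)] using this

/-- Coordinate-change step of Proposition 1: with `U′ = 1/h`, `V′ = 1/g`
and `Φ(x,t) = (U⁻¹(x−t), V⁻¹(x+t))`, the pullback under `Φ` of the quadratic form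
`Λ du dv` is `(Λ∘Φ)·h(U⁻¹(x−t))·g(V⁻¹(x+t))·(dx² − dt²)`: for every point `(x,t)` and
tangent vector `(a,b)` with image `(p,q)` under the derivative of `Φ`,
`Λ(Φ(x,t))·p·q = Λ(Φ(x,t))·h(U⁻¹(x−t))·g(V⁻¹(x+t))·(a² − b²)`. -/
theorem stmt1 (Λ : ℝ × ℝ → ℝ) (h g : ℝ → ℝ) (hh : Continuous h) (hg : Continuous g)
    (hh0 : ∀ u, h u ≠ 0) (hg0 : ∀ v, g v ≠ 0)
    (U V : ℝ → ℝ) (hU : Differentiable ℝ U) (hV : Differentiable ℝ V)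
    (hUbij : Function.Bijective U) (hVbij : Function.Bijective V)
    (hU' : ∀ u, deriv U u = 1 / h u) (hV' : ∀ v, deriv V v = 1 / g v)
    (Φ : ℝ × ℝ → ℝ × ℝ)
    (hΦ : ∀ x t : ℝ, Φ (x, t) = (Function.invFun U (x - t), Function.invFun V (x + t))) :
    ∀ x t a b : ℝ,
      Λ (Φ (x, t)) * (fderiv ℝ Φ (x, t) (a, b)).1 * (fderiv ℝ Φ (x, t) (a, b)).2 =
        Λ (Φ (x, t)) * h (Function.invFun U (x - t)) * g (Function.invFun V (x + t)) *
          (a ^ 2 - b ^ 2) := by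
  have hUd := invFun_hasDerivAt h hh0 U hU hUbij hU'
  have hVd := invFun_hasDerivAt g hg0 V hV hVbij hV'
  have hΦeq : Φ = fun p : ℝ × ℝ =>
      (Function.invFun U (p.1 - p.2), Function.invFun V (p.1 + p.2)) := by
    funext p; rw [← hΦ p.1 p.2]
  intro x t a b
  set L1 : ℝ × ℝ →L[ℝ] ℝ :=
    ContinuousLinearMap.fst ℝ ℝ ℝ - ContinuousLinearMap.snd ℝ ℝ ℝ with hL1
  set L2 : ℝ × ℝ →L[ℝ] ℝ :=
    ContinuousLinearMap.fst ℝ ℝ ℝ + ContinuousLinearMap.snd ℝ ℝ ℝ with hL2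
  have h1 : HasFDerivAt (fun p : ℝ × ℝ => Function.invFun U (p.1 - p.2))
      ((h (Function.invFun U (x - t))) • L1) (x, t) := by
    have hsub : HasFDerivAt (fun p : ℝ × ℝ => p.1 - p.2) L1 (x, t) := L1.hasFDerivAt
    exact (hUd (x - t)).comp_hasFDerivAt (x, t) hsub
  have h2 : HasFDerivAt (fun p : ℝ × ℝ => Function.invFun V (p.1 + p.2))
      ((g (Function.invFun V (x + t))) • L2) (x, t) := by
    have hadd : HasFDerivAt (fun p : ℝ × ℝ => p.1 + p.2) L2 (x, t) := L2.hasFDerivAt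
    exact (hVd (x + t)).comp_hasFDerivAt (x, t) hadd
  have hΦd : HasFDerivAt Φ
      (((h (Function.invFun U (x - t))) • L1).prod
        ((g (Function.invFun V (x + t))) • L2)) (x, t) := by
    rw [hΦeq]; exact h1.prodMk h2
  rw [hΦd.fderiv]
  simp only [ContinuousLinearMap.prod_apply, ContinuousLinearMap.smul_apply, hL1, hL2,
    ContinuousLinearMap.sub_apply, ContinuousLinearMap.add_apply,
    ContinuousLinearMap.coe_fst', ContinuousLinearMap.coe_snd', smul_eq_mul]
  ring
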